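/- arXiv:1201.0101 — 4 statements merged into one kernel-verified Lean document; each statement's English description precedes it below -/
import Mathlib

section
/- The geometric mean is congruence invariant: for Hermitian positive definite A, B and any invertible matrix S, (S* A S) # (S* B S) = S* (A # B) S. -/
open Matrix ComplexOrder
set_option maxHeartbeats 1000000

namespace Matrix.PosSemidef

/-- The square root of a positive semidefinite matrix (as defined in Mathlib, Dec 2024). -/
noncomputable def sqrt {n 𝕜 : Type*} [Fintype n] [DecidableEq n] [RCLike 𝕜]
    {A : Matrix n n 𝕜} (hA : PosSemidef A) : Matrix n n 𝕜 :=
  hA.1.eigenvectorUnitary.1 * diagonal ((↑) ∘ (√·) ∘ hA.1.eigenvalues) *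
    (star hA.1.eigenvectorUnitary : Matrix n n 𝕜)

lemma posSemidef_sqrt {n 𝕜 : Type*} [Fintype n] [DecidableEq n] [RCLike 𝕜]
    {A : Matrix n n 𝕜} (hA : PosSemidef A) : PosSemidef hA.sqrt := by
  apply PosSemidef.mul_mul_conjTranspose_same
  refine posSemidef_diagonal_iff.mpr fun i ↦ ?_
  rw [Function.comp_apply, RCLike.nonneg_iff]
  constructor
  · simp only [RCLike.ofReal_re]
    exact Real.sqrt_nonneg _
  · simp only [RCLike.ofReal_im]

section portHelpers

open scoped MatrixOrder

lemma sqrt_eq_cfc_sqrt {n 𝕜 : Type*} [Fintype n] [DecidableEq n] [RCLike 𝕜]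
    {A : Matrix n n 𝕜} (hA : PosSemidef A) : hA.sqrt = CFC.sqrt A := by
  rw [CFC.sqrt_eq_cfc, cfc_nnreal_eq_real _ A, hA.1.cfc_eq]
  simp only [IsHermitian.cfc, sqrt, Unitary.conjStarAlgAut_apply]
  congr 3
  funext i
  simp [Real.coe_sqrt, Real.coe_toNNReal', max_eq_left (hA.eigenvalues_nonneg i)]

lemma sqrt_mul_self {n 𝕜 : Type*} [Fintype n] [DecidableEq n] [RCLike 𝕜]
    {A : Matrix n n 𝕜} (hA : PosSemidef A) : hA.sqrt * hA.sqrt = A := by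
  rw [sqrt_eq_cfc_sqrt]
  exact CFC.sqrt_mul_sqrt_self A hA.nonneg

lemma eq_sqrt_of_sq_eq {n 𝕜 : Type*} [Fintype n] [DecidableEq n] [RCLike 𝕜]
    {A : Matrix n n 𝕜} (hA : PosSemidef A) {B : Matrix n n 𝕜} (hB : PosSemidef B)
    (hAB : A ^ 2 = B) : A = hB.sqrt := by
  rw [sqrt_eq_cfc_sqrt, eq_comm, CFC.sqrt_eq_iff B A hB.nonneg hA.nonneg, ← hAB, sq]

end portHelpers

end Matrix.PosSemidef


lemma geomMean_aux {n : ℕ} {A B : Matrix (Fin n) (Fin n) ℂ} (hA : A.PosDef) (hB : B.PosDef) :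
    ((hA.posSemidef.sqrt)⁻¹ * B * (hA.posSemidef.sqrt)⁻¹).PosSemidef := by
  have h := hB.posSemidef.conjTranspose_mul_mul_same (hA.posSemidef.sqrt)⁻¹
  rwa [(hA.posSemidef.posSemidef_sqrt.isHermitian.inv).eq] at h

/-- The geometric mean `A # B = A^{1/2} (A^{-1/2} B A^{-1/2})^{1/2} A^{1/2}` of two
Hermitian positive definite matrices. -/
noncomputable def geomMean {n : ℕ} {A B : Matrix (Fin n) (Fin n) ℂ}
    (hA : A.PosDef) (hB : B.PosDef) : Matrix (Fin n) (Fin n) ℂ :=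
  hA.posSemidef.sqrt * (geomMean_aux hA hB).sqrt * hA.posSemidef.sqrt

lemma sqrt_isUnit_det {n : ℕ} {A : Matrix (Fin n) (Fin n) ℂ} (hA : A.PosDef) :
    IsUnit hA.posSemidef.sqrt.det := by
  have h : hA.posSemidef.sqrt.det * hA.posSemidef.sqrt.det = A.det := by
    rw [← det_mul, hA.posSemidef.sqrt_mul_self]
  have hU : IsUnit A.det := hA.det_pos.ne'.isUnit
  exact isUnit_of_mul_isUnit_left (h ▸ hU)

lemma inv_sqrt_mul_inv_sqrt {n : ℕ} {A : Matrix (Fin n) (Fin n) ℂ} (hA : A.PosDef) :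
    hA.posSemidef.sqrt⁻¹ * hA.posSemidef.sqrt⁻¹ = A⁻¹ := by
  rw [← Matrix.mul_inv_rev, hA.posSemidef.sqrt_mul_self]

lemma geomMean_posSemidef {n : ℕ} {A B : Matrix (Fin n) (Fin n) ℂ}
    (hA : A.PosDef) (hB : B.PosDef) : (geomMean hA hB).PosSemidef := by
  have h := (geomMean_aux hA hB).posSemidef_sqrt.mul_mul_conjTranspose_same hA.posSemidef.sqrt
  rwa [hA.posSemidef.posSemidef_sqrt.isHermitian.eq] at h

lemma conj_calc {n : ℕ} {T C B : Matrix (Fin n) (Fin n) ℂ} (hT : IsUnit T.det)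
    (hC : C * C = T⁻¹ * B * T⁻¹) :
    (T * C * T) * (T⁻¹ * T⁻¹) * (T * C * T) = B := by
  calc (T * C * T) * (T⁻¹ * T⁻¹) * (T * C * T)
      = T * (C * ((T * T⁻¹) * (T⁻¹ * T) * C)) * T := by simp only [Matrix.mul_assoc]
    _ = T * (C * C) * T := by
        rw [Matrix.mul_nonsing_inv _ hT, Matrix.nonsing_inv_mul _ hT, Matrix.one_mul,
          Matrix.one_mul, Matrix.mul_assoc]
    _ = B := by
        rw [hC]
        simp only [Matrix.mul_assoc]
        rw [Matrix.mul_nonsing_inv_cancel_left _ _ hT, ← Matrix.mul_assoc,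
          Matrix.nonsing_inv_mul_cancel_right _ _ hT]

lemma geomMean_prop {n : ℕ} {A B : Matrix (Fin n) (Fin n) ℂ}
    (hA : A.PosDef) (hB : B.PosDef) :
    geomMean hA hB * A⁻¹ * geomMean hA hB = B := by
  rw [geomMean, ← inv_sqrt_mul_inv_sqrt hA]
  exact conj_calc (sqrt_isUnit_det hA) (geomMean_aux hA hB).sqrt_mul_self

lemma geomMean_unique {n : ℕ} {A B X : Matrix (Fin n) (Fin n) ℂ}
    (hA : A.PosDef) (hB : B.PosDef) (hX : X.PosSemidef)
    (hXX : X * A⁻¹ * X = B) : X = geomMean hA hB := by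
  set T := hA.posSemidef.sqrt with hTdef
  have hT : IsUnit T.det := sqrt_isUnit_det hA
  have hTH : T⁻¹.IsHermitian := hA.posSemidef.posSemidef_sqrt.isHermitian.inv
  have hY : (T⁻¹ * X * T⁻¹).PosSemidef := by
    have h := hX.conjTranspose_mul_mul_same T⁻¹
    rwa [hTH.eq] at h
  have hsq : (T⁻¹ * X * T⁻¹) ^ 2 = T⁻¹ * B * T⁻¹ := by
    rw [pow_two, ← hXX, ← inv_sqrt_mul_inv_sqrt hA, ← hTdef]
    simp only [Matrix.mul_assoc]
  have heq : T⁻¹ * X * T⁻¹ = (geomMean_aux hA hB).sqrt :=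
    hY.eq_sqrt_of_sq_eq (geomMean_aux hA hB) hsq
  have : T * (T⁻¹ * X * T⁻¹) * T = geomMean hA hB := by
    rw [heq]; rfl
  rw [← this, ← Matrix.mul_assoc, Matrix.mul_nonsing_inv_cancel_left _ _ hT,
    Matrix.nonsing_inv_mul_cancel_right _ _ hT]

/-- Congruence invariance of the geometric mean. -/
theorem geomMean_congruence_invariant {n : ℕ} {A B S : Matrix (Fin n) (Fin n) ℂ}
    (hA : A.PosDef) (hB : B.PosDef) (hS : IsUnit S.det)
    (hAS : (Sᴴ * A * S).PosDef) (hBS : (Sᴴ * B * S).PosDef) :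
    geomMean hAS hBS = Sᴴ * geomMean hA hB * S := by
  have hSH : IsUnit Sᴴ.det := by
    rw [Matrix.det_conjTranspose]; exact hS.star
  have hPSD : (Sᴴ * geomMean hA hB * S).PosSemidef :=
    (geomMean_posSemidef hA hB).conjTranspose_mul_mul_same S
  refine ((geomMean_unique hAS hBS hPSD ?_)).symm
  have hinv : (Sᴴ * A * S)⁻¹ = S⁻¹ * A⁻¹ * Sᴴ⁻¹ := by
    rw [Matrix.mul_inv_rev, Matrix.mul_inv_rev, Matrix.mul_assoc]
  rw [hinv]
  calc Sᴴ * geomMean hA hB * S * (S⁻¹ * A⁻¹ * Sᴴ⁻¹) * (Sᴴ * geomMean hA hB * S)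
      = Sᴴ * (geomMean hA hB * ((S * S⁻¹) * A⁻¹ * (Sᴴ⁻¹ * Sᴴ)) * geomMean hA hB) * S := by
        simp only [Matrix.mul_assoc]
    _ = Sᴴ * (geomMean hA hB * A⁻¹ * geomMean hA hB) * S := by
        rw [Matrix.mul_nonsing_inv _ hS, Matrix.nonsing_inv_mul _ hSH, Matrix.one_mul,
          Matrix.mul_one, Matrix.mul_assoc]
    _ = Sᴴ * B * S := by rw [geomMean_prop hA hB]
end

section
/- Let A, B be Hermitian positive definite and define the averaging iteration A_0 = A, B_0 = B, A_{k+1} = (A_k + B_k)/2, B_{k+1} = 2(A_k^{-1} + B_k^{-1})^{-1}. Then for all k ≥ 0, A_k = A B_k^{-1} B = B B_k^{-1} A and B_k = A A_k^{-1} B = B A_k^{-1} A. -/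
open Matrix ComplexOrder

lemma posDef_smul_of_pos {n : ℕ} {M : Matrix (Fin n) (Fin n) ℂ} {c : ℂ} (hc : 0 < c)
    (hM : M.PosDef) : (c • M).PosDef := by
  have him : c.im = 0 := by
    have := (Complex.lt_def.mp hc).2
    simpa using this.symm
  refine PosDef.of_dotProduct_mulVec_pos ?_ (fun x hx => ?_)
  · show (c • M)ᴴ = c • M
    rw [conjTranspose_smul, hM.1.eq]
    congr 1
    simp [Complex.ext_iff, him]
  · simp only [smul_mulVec, dotProduct_smul, smul_eq_mul]
    exact mul_pos hc (hM.dotProduct_mulVec_pos hx)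

/-- In the averaging iteration, `A_k = A B_k⁻¹ B = B B_k⁻¹ A` and
`B_k = A A_k⁻¹ B = B A_k⁻¹ A` for all `k`. -/
theorem averaging_cross_relations {n : ℕ} {A B : Matrix (Fin n) (Fin n) ℂ}
    (hA : A.PosDef) (hB : B.PosDef)
    (As Bs : ℕ → Matrix (Fin n) (Fin n) ℂ)
    (hA0 : As 0 = A) (hB0 : Bs 0 = B)
    (hArec : ∀ k, As (k + 1) = (2 : ℂ)⁻¹ • (As k + Bs k))
    (hBrec : ∀ k, Bs (k + 1) = (2 : ℂ) • ((As k)⁻¹ + (Bs k)⁻¹)⁻¹) :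
    ∀ k, (As k = A * (Bs k)⁻¹ * B ∧ As k = B * (Bs k)⁻¹ * A) ∧
      (Bs k = A * (As k)⁻¹ * B ∧ Bs k = B * (As k)⁻¹ * A) := by
  have hdet : ∀ {M : Matrix (Fin n) (Fin n) ℂ}, M.PosDef → IsUnit M.det :=
    fun hM => hM.det_pos.ne'.isUnit
  have hBd := hdet hB
  -- The key invariant: `A_k B⁻¹ B_k = A = B_k B⁻¹ A_k`, plus positive definiteness.
  have key : ∀ k, (As k).PosDef ∧ (Bs k).PosDef ∧
      As k * B⁻¹ * Bs k = A ∧ Bs k * B⁻¹ * As k = A := by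
    intro k
    induction k with
    | zero =>
      refine ⟨hA0 ▸ hA, hB0 ▸ hB, ?_, ?_⟩
      · rw [hA0, hB0, nonsing_inv_mul_cancel_right _ _ hBd]
      · rw [hA0, hB0, mul_nonsing_inv _ hBd, one_mul]
    | succ k ih =>
      obtain ⟨hAk, hBk, h1, h2⟩ := ih
      have hAkd := hdet hAk
      have hBkd := hdet hBk
      have hS : ((As k)⁻¹ + (Bs k)⁻¹).PosDef := hAk.inv.add hBk.inv
      have hSd := hdet hS
      have e1 : As k * B⁻¹ = A * (Bs k)⁻¹ := by
        rw [← h1, mul_nonsing_inv_cancel_right _ _ hBkd]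
      have e2 : Bs k * B⁻¹ = A * (As k)⁻¹ := by
        rw [← h2, mul_nonsing_inv_cancel_right _ _ hAkd]
      have e3 : B⁻¹ * As k = (Bs k)⁻¹ * A := by
        rw [← h2, mul_assoc, nonsing_inv_mul_cancel_left _ _ hBkd]
      have e4 : B⁻¹ * Bs k = (As k)⁻¹ * A := by
        rw [← h1, mul_assoc, nonsing_inv_mul_cancel_left _ _ hAkd]
      have htwo : ((2 : ℂ)⁻¹ * 2) = 1 := by norm_num
      refine ⟨?_, ?_, ?_, ?_⟩
      · rw [hArec]
        exact posDef_smul_of_pos (by simp [Complex.lt_def]) (hAk.add hBk)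
      · rw [hBrec]
        exact posDef_smul_of_pos (by simp [Complex.lt_def]) hS.inv
      · rw [hArec, hBrec]
        simp only [smul_mul_assoc, mul_smul_comm, smul_smul]
        rw [add_mul, e1, e2, ← mul_add, add_comm ((Bs k)⁻¹) ((As k)⁻¹),
          mul_nonsing_inv_cancel_right _ _ hSd,
          show ((2:ℂ) * 2⁻¹) = 1 by norm_num, one_smul]
      · rw [hArec, hBrec]
        simp only [smul_mul_assoc, mul_smul_comm, smul_smul]
        rw [htwo, one_smul, mul_assoc, mul_add, e3, e4, ← add_mul,
          add_comm ((Bs k)⁻¹) ((As k)⁻¹), nonsing_inv_mul_cancel_left _ _ hSd]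
  intro k
  obtain ⟨hAk, hBk, h1, h2⟩ := key k
  have hAkd := hdet hAk
  have hBkd := hdet hBk
  have e1 : A * (Bs k)⁻¹ = As k * B⁻¹ := by
    rw [← h1, mul_nonsing_inv_cancel_right _ _ hBkd]
  have e2 : A * (As k)⁻¹ = Bs k * B⁻¹ := by
    rw [← h2, mul_nonsing_inv_cancel_right _ _ hAkd]
  have e3 : (Bs k)⁻¹ * A = B⁻¹ * As k := by
    rw [← h2, mul_assoc, nonsing_inv_mul_cancel_left _ _ hBkd]
  have e4 : (As k)⁻¹ * A = B⁻¹ * Bs k := by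
    rw [← h1, mul_assoc, nonsing_inv_mul_cancel_left _ _ hAkd]
  refine ⟨⟨?_, ?_⟩, ?_, ?_⟩
  · rw [e1, nonsing_inv_mul_cancel_right _ _ hBd]
  · rw [mul_assoc, e3, mul_nonsing_inv_cancel_left _ _ hBd]
  · rw [e2, nonsing_inv_mul_cancel_right _ _ hBd]
  · rw [mul_assoc, e4, mul_nonsing_inv_cancel_left _ _ hBd]
end

section
/- Define g_k(z) = ((1+z)^k − (1−z)^k)/((1+z)^k + (1−z)^k) for z complex with (1+z)^k + (1−z)^k ≠ 0. Then for all positive integers r, s, g_{rs}(z) = g_r(g_s(z)). -/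
/-- The `k`-th principal Padé iteration function for the matrix sign. -/
noncomputable def padeSign (k : ℕ) (z : ℂ) : ℂ :=
  ((1 + z) ^ k - (1 - z) ^ k) / ((1 + z) ^ k + (1 - z) ^ k)

/-- Composition property of the principal Padé iterations: `g_{rs} = g_r ∘ g_s`. -/
theorem padeSign_comp (r s : ℕ) (hr : 0 < r) (hs : 0 < s) (z : ℂ)
    (h1 : (1 + z) ^ s + (1 - z) ^ s ≠ 0)
    (h2 : (1 + z) ^ (r * s) + (1 - z) ^ (r * s) ≠ 0) :
    padeSign (r * s) z = padeSign r (padeSign s z) := by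
  unfold padeSign
  rw [mul_comm r s, pow_mul, pow_mul] at h2 ⊢
  set a := (1 + z) ^ s with ha
  set b := (1 - z) ^ s with hb
  have e1 : 1 + (a - b) / (a + b) = 2 * a / (a + b) := by
    field_simp; ring
  have e2 : 1 - (a - b) / (a + b) = 2 * b / (a + b) := by
    field_simp; ring
  rw [e1, e2, div_pow, div_pow, div_sub_div_same, ← add_div,
    div_div_div_cancel_right₀]
  · rw [mul_pow, mul_pow, ← mul_sub, ← mul_add,
      mul_div_mul_left _ _ (pow_ne_zero _ two_ne_zero : (2 : ℂ) ^ r ≠ 0)]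
  · exact pow_ne_zero _ h1
end

section
/- Let z be a complex number not in (−∞, 0], and define the Newton iteration z_0 = z, z_{k+1} = (z_k + z/z_k)/2 for the square root of z. Then for each k ≥ 1, z_k = p(z)/q(z), where p/q is the [2^{k−1}, 2^{k−1}−1] Padé approximant at 1 of the function z^{1/2}. -/
/-- The Newton iteration for the square root of `z ∉ (−∞, 0]` produces the `[2^{k−1}, 2^{k−1}−1]`
Padé approximants of `z^{1/2}` at `1`; equivalently, writing `s = √z` (principal branch),
`z_k = s ((1+s)^{2^k} + (1−s)^{2^k}) / ((1+s)^{2^k} − (1−s)^{2^k})` for `k ≥ 1`. -/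
theorem newton_sqrt_eq_pade (z : ℂ) (hz : ¬(z.im = 0 ∧ z.re ≤ 0))
    (w : ℕ → ℂ) (hw0 : w 0 = z)
    (hrec : ∀ k, w (k + 1) = (w k + z / w k) / 2) :
    ∀ k, 1 ≤ k →
      w k = z ^ ((1 : ℂ) / 2) *
          ((1 + z ^ ((1 : ℂ) / 2)) ^ (2 ^ k) + (1 - z ^ ((1 : ℂ) / 2)) ^ (2 ^ k)) /
          ((1 + z ^ ((1 : ℂ) / 2)) ^ (2 ^ k) - (1 - z ^ ((1 : ℂ) / 2)) ^ (2 ^ k)) := by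
  have hz0 : z ≠ 0 := by rintro rfl; exact hz ⟨rfl, le_refl 0⟩
  set s : ℂ := z ^ ((1 : ℂ) / 2) with hs_def
  have hsre : 0 < s.re := by
    rw [hs_def, Complex.cpow_def_of_ne_zero hz0, Complex.exp_re]
    have harg : |Complex.arg z| < Real.pi := by
      rcases lt_or_eq_of_le (Complex.arg_le_pi z) with h | h
      · rw [abs_lt]; exact ⟨Complex.neg_pi_lt_arg z, h⟩
      · exact absurd ⟨(Complex.arg_eq_pi_iff.mp h).2,
          (Complex.arg_eq_pi_iff.mp h).1.le⟩ hz
    have him : (Complex.log z * ((1:ℂ)/2)).im = Complex.arg z / 2 := by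
      simp [Complex.log_im, Complex.mul_im, Complex.log_re]; ring
    rw [him]
    have : 0 < Real.cos (Complex.arg z / 2) := by
      apply Real.cos_pos_of_mem_Ioo
      rw [abs_lt] at harg
      constructor <;> [linarith [harg.1]; linarith [harg.2]]
    positivity
  have hs0 : s ≠ 0 := fun h => by simp [h] at hsre
  have hs2 : s ^ 2 = z := by
    have h := Complex.cpow_nat_inv_pow z (n := 2) two_ne_zero
    rw [hs_def, show (1:ℂ)/2 = ((2:ℕ):ℂ)⁻¹ by norm_num, h]
  have habs : ‖1 - s‖ < ‖1 + s‖ := by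
    rw [← Real.sqrt_sq (norm_nonneg (1-s)), ← Real.sqrt_sq (norm_nonneg (1+s))]
    apply Real.sqrt_lt_sqrt (by positivity)
    rw [← Complex.normSq_eq_norm_sq, ← Complex.normSq_eq_norm_sq]
    simp [Complex.normSq_apply, Complex.add_re, Complex.add_im, Complex.sub_re, Complex.sub_im]
    nlinarith
  have hden : ∀ k : ℕ, 1 ≤ k → (1 + s) ^ (2 ^ k) - (1 - s) ^ (2 ^ k) ≠ 0 ∧
      (1 + s) ^ (2 ^ k) + (1 - s) ^ (2 ^ k) ≠ 0 := by
    intro k hk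
    have hlt : ‖(1 - s) ^ (2 ^ k)‖ < ‖(1 + s) ^ (2 ^ k)‖ := by
      rw [norm_pow, norm_pow]
      exact pow_lt_pow_left₀ habs (norm_nonneg _) (by positivity)
    constructor
    · intro h
      rw [sub_eq_zero] at h
      rw [h] at hlt; exact lt_irrefl _ hlt
    · intro h
      have : (1 + s) ^ (2 ^ k) = -((1 - s) ^ (2 ^ k)) := by linear_combination h
      rw [this, norm_neg] at hlt; exact lt_irrefl _ hlt
  intro k hk
  induction k with
  | zero => omega
  | succ n ih =>
    rcases Nat.eq_or_lt_of_le hk with h1 | h1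
    · have hn : n = 0 := by omega
      subst hn
      have h4s : (1 + s) ^ (2 ^ 1) - (1 - s) ^ (2 ^ 1) = 4 * s := by ring
      have hnum : (1 + s) ^ (2 ^ 1) + (1 - s) ^ (2 ^ 1) = 2 + 2 * z := by
        rw [← hs2]; ring
      rw [hrec 0, hw0, h4s, hnum, div_self hz0, ← hs2]
      field_simp
      ring
    · have hn1 : 1 ≤ n := by omega
      have ihn := ih hn1
      obtain ⟨hd, hn⟩ := hden n hn1
      set A := (1 + s) ^ (2 ^ n) with hA
      set B := (1 - s) ^ (2 ^ n) with hB
      have hwn : w n ≠ 0 := by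
        rw [ihn]
        exact div_ne_zero (mul_ne_zero hs0 hn) hd
      have hA2 : (1 + s) ^ (2 ^ (n + 1)) = A ^ 2 := by
        rw [hA, ← pow_mul, pow_succ]
      have hB2 : (1 - s) ^ (2 ^ (n + 1)) = B ^ 2 := by
        rw [hB, ← pow_mul, pow_succ]
      have hd2 : A ^ 2 - B ^ 2 ≠ 0 := by
        have : A ^ 2 - B ^ 2 = (A - B) * (A + B) := by ring
        rw [this]; exact mul_ne_zero hd hn
      rw [hrec n, ihn, hA2, hB2, ← hs2]
      rw [ihn] at hwn
      field_simp
      ring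
end
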